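/- Let w be a real random variable with E[w] = 0, E[w²] > 0, and E[|w|³] < ∞; let b ≠ 0 be real and a ∈ {−1, 1}. Define V : ℝ → ℝ by V(x) := √(max(ln|x|, 0)) (with V(0) := 0). Then there exists R ≥ 1 such that for all x with |x| ≥ R, E[V(a x + b w)] ≤ V(x). -/

import Mathlib

open MeasureTheory

lemma log_taylor2_bound {s : ℝ} (hs : |s| ≤ 1/2) :
    Real.log (1 + s) ≤ s - s^2/2 + 2*|s|^3 := by
  have h1 : |(-s)| < 1 := by rw [abs_neg]; linarith
  have h2 := Real.abs_log_sub_add_sum_range_le h1 2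
  have hsum : (∑ i ∈ Finset.range 2, (-s) ^ (i + 1) / (i + 1)) = -s + s^2/2 := by
    simp [Finset.sum_range_succ]
    ring
  rw [hsum, abs_neg, show (1 : ℝ) - -s = 1 + s by ring, show (2+1 : ℕ) = 3 from rfl] at h2
  have h4 : |s|^3 / (1 - |s|) ≤ 2*|s|^3 := by
    rw [div_le_iff₀ (by linarith [abs_nonneg s])]
    nlinarith [pow_nonneg (abs_nonneg s) 3]
  have h5 := (abs_le.mp h2).2
  linarith

lemma max_log_le {y v : ℝ} (hy : 2 ≤ y) :
    max (Real.log |y + v|) 0 ≤ Real.log y + |v|/y := by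
  have hy0 : (0:ℝ) < y := by linarith
  have hv0 := abs_nonneg v
  have hge : (1:ℝ) ≤ y + |v| := by linarith
  have h1 : max (Real.log |y + v|) 0 ≤ Real.log (y + |v|) := by
    refine max_le ?_ (Real.log_nonneg hge)
    by_cases h1 : |y + v| ≤ 1
    · exact le_trans (Real.log_nonpos (abs_nonneg _) h1) (Real.log_nonneg hge)
    · push_neg at h1
      refine Real.log_le_log (by linarith) ?_
      calc |y + v| ≤ |y| + |v| := abs_add_le y v
        _ = y + |v| := by rw [abs_of_pos hy0]
  have h2 : Real.log (y + |v|) = Real.log y + Real.log (1 + |v|/y) := by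
    rw [show y + |v| = y * (1 + |v|/y) by field_simp, Real.log_mul (ne_of_gt hy0) (by positivity)]
  have h3 : Real.log (1 + |v|/y) ≤ |v|/y := by
    have := Real.log_le_sub_one_of_pos (show (0:ℝ) < 1 + |v|/y by positivity)
    linarith
  linarith

lemma key_pointwise {y v : ℝ} (hy : 2 ≤ y) :
    max (Real.log |y + v|) 0 ≤ Real.log y + v/y - v^2/(2*y^2) + 9*|v|^3/y^3 := by
  have hy0 : (0:ℝ) < y := by linarith
  have eu2 : (|v|/y)^2 = v^2/y^2 := by rw [div_pow, sq_abs]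
  have eu3 : (|v|/y)^3 = |v|^3/y^3 := by rw [div_pow]
  by_cases h : |v| ≤ y/2
  · -- main region
    have hav := abs_le.mp h
    have hyv : (1:ℝ) ≤ y + v := by linarith
    rw [abs_of_pos (by linarith : (0:ℝ) < y + v), max_eq_left (Real.log_nonneg hyv)]
    have hvy : -(1/2 : ℝ) ≤ v/y := by rw [le_div_iff₀ hy0]; linarith
    rw [show y + v = y * (1 + v/y) by field_simp,
      Real.log_mul (ne_of_gt hy0) (by intro hh; linarith)]
    have hs : |v/y| ≤ 1/2 := by
      rw [abs_div, abs_of_pos hy0, div_le_iff₀ hy0]; linarith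
    have ht := log_taylor2_bound hs
    have e1 : (v/y)^2/2 = v^2/(2*y^2) := by ring
    have e2 : |v/y|^3 = |v|^3/y^3 := by rw [abs_div, abs_of_pos hy0, div_pow]
    rw [e1, e2] at ht
    have e3 : 9 * |v|^3/y^3 = 9 * (|v|^3/y^3) := by ring
    have h6 : (0:ℝ) ≤ |v|^3/y^3 := by positivity
    linarith
  · push_neg at h
    have hu_half : 1/2 < |v|/y := by rw [lt_div_iff₀ hy0]; linarith
    have hvge : -(|v|/y) ≤ v/y := by
      rw [← neg_div]; gcongr; exact neg_abs_le v
    have hkey : 2*(|v|/y) + (|v|/y)^2/2 ≤ 9*(|v|/y)^3 := by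
      nlinarith [mul_nonneg (mul_nonneg (by linarith : (0:ℝ) ≤ |v|/y)
        (by linarith : (0:ℝ) ≤ |v|/y - 1/2)) (by linarith : (0:ℝ) ≤ 9*(|v|/y) + 4)]
    have e4 : v^2/(2*y^2) = (|v|/y)^2/2 := by rw [eu2]; ring
    have e5 : 9*|v|^3/y^3 = 9*((|v|/y)^3) := by rw [eu3]; ring
    have hm := max_log_le (v := v) hy
    linarith

lemma core_drift {Ω : Type*} [MeasurableSpace Ω]
    (μ : Measure Ω) [IsProbabilityMeasure μ]
    (w : Ω → ℝ) (hmeas : Measurable w)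
    (hmean : ∫ ω, w ω ∂μ = 0)
    (hvar : 0 < ∫ ω, (w ω) ^ 2 ∂μ)
    (h3 : Integrable (fun ω => |w ω| ^ 3) μ)
    (c : ℝ) (y : ℝ)
    (hy : max 2 (18 * |c| * (∫ ω, |w ω| ^ 3 ∂μ) / (∫ ω, (w ω) ^ 2 ∂μ)) ≤ y) :
    ∫ ω, Real.sqrt (max (Real.log |y + c * w ω|) 0) ∂μ ≤
      Real.sqrt (max (Real.log y) 0) := by
  have hy2 : (2:ℝ) ≤ y := le_trans (le_max_left _ _) hy
  have hy0 : (0:ℝ) < y := by linarith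
  set M2 := ∫ ω, (w ω) ^ 2 ∂μ with hM2
  set M3 := ∫ ω, |w ω| ^ 3 ∂μ with hM3
  have hM3nn : 0 ≤ M3 := integral_nonneg fun ω => by positivity
  have hyM : 18 * |c| * M3 / M2 ≤ y := le_trans (le_max_right _ _) hy
  have hL : 0 < Real.log y := Real.log_pos (by linarith)
  -- integrability
  have hw1 : Integrable w μ := by
    refine Integrable.mono' ((integrable_const 1).add h3) hmeas.aestronglyMeasurable
      (Filter.Eventually.of_forall fun ω => ?_)
    have ht := abs_nonneg (w ω)
    rw [Real.norm_eq_abs]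
    simp only [Pi.add_apply]
    nlinarith [mul_nonneg (sq_nonneg (|w ω| - 1)) ht, sq_nonneg (|w ω| - 1/2)]
  have hw2 : Integrable (fun ω => (w ω)^2) μ := by
    refine Integrable.mono' ((integrable_const 1).add h3)
      (hmeas.pow_const 2).aestronglyMeasurable (Filter.Eventually.of_forall fun ω => ?_)
    have ht := abs_nonneg (w ω)
    rw [Real.norm_eq_abs, abs_of_nonneg (sq_nonneg _), ← sq_abs]
    simp only [Pi.add_apply]
    nlinarith [mul_nonneg (sq_nonneg (|w ω| - 1)) ht, sq_nonneg (|w ω| - 1/2)]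
  have hwa : Integrable (fun ω => |w ω|) μ := hw1.abs
  have hmax_meas : AEStronglyMeasurable (fun ω => max (Real.log |y + c * w ω|) 0) μ :=
    ((Real.measurable_log.comp (measurable_const.add (hmeas.const_mul c)).abs).max
      measurable_const).aestronglyMeasurable
  have hImax : Integrable (fun ω => max (Real.log |y + c * w ω|) 0) μ := by
    refine Integrable.mono' ((integrable_const (Real.log y)).add (hwa.const_mul (|c|/y)))
      hmax_meas (Filter.Eventually.of_forall fun ω => ?_)
    rw [Real.norm_eq_abs, abs_of_nonneg (le_max_right _ _)]
    have := max_log_le (v := c * w ω) hy2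
    calc max (Real.log |y + c * w ω|) 0 ≤ Real.log y + |c * w ω|/y := this
      _ = Real.log y + |c|/y * |w ω| := by rw [abs_mul]; ring
  -- integral of max bounded by log y
  have hIle : ∫ ω, max (Real.log |y + c * w ω|) 0 ∂μ ≤ Real.log y := by
    have hRHSint : Integrable (fun ω =>
        Real.log y + (c/y) * w ω - (c^2/(2*y^2)) * (w ω)^2 + (9*|c|^3/y^3) * |w ω|^3) μ :=
      (((integrable_const _).add (hw1.const_mul _)).sub (hw2.const_mul _)).add
        (h3.const_mul _)
    have hpt : ∀ ω, max (Real.log |y + c * w ω|) 0 ≤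
        Real.log y + (c/y) * w ω - (c^2/(2*y^2)) * (w ω)^2 + (9*|c|^3/y^3) * |w ω|^3 := by
      intro ω
      have hk := key_pointwise (v := c * w ω) hy2
      have e1 : (c * w ω)/y = (c/y) * w ω := by ring
      have e2 : (c * w ω)^2/(2*y^2) = (c^2/(2*y^2)) * (w ω)^2 := by ring
      have e3 : 9*|c * w ω|^3/y^3 = (9*|c|^3/y^3) * |w ω|^3 := by rw [abs_mul]; ring
      rw [e1, e2, e3] at hk
      exact hk
    have iA : Integrable (fun _ : Ω => Real.log y) μ := integrable_const _
    have iB : Integrable (fun ω => (c/y) * w ω) μ := hw1.const_mul _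
    have iC : Integrable (fun ω => (c^2/(2*y^2)) * (w ω)^2) μ := hw2.const_mul _
    have iD : Integrable (fun ω => (9*|c|^3/y^3) * |w ω|^3) μ := h3.const_mul _
    have iAB : Integrable (fun ω => Real.log y + (c/y) * w ω) μ := iA.add iB
    have iABC : Integrable (fun ω => Real.log y + (c/y) * w ω
        - (c^2/(2*y^2)) * (w ω)^2) μ := iAB.sub iC
    have hint : ∫ ω, (Real.log y + (c/y) * w ω - (c^2/(2*y^2)) * (w ω)^2
          + (9*|c|^3/y^3) * |w ω|^3) ∂μ
        = Real.log y - (c^2/(2*y^2)) * M2 + (9*|c|^3/y^3) * M3 := by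
      rw [integral_add iABC iD, integral_sub iAB iC, integral_add iA iB,
        integral_const_mul, integral_const_mul, integral_const_mul, integral_const, hmean]
      simp [measure_univ]
      rfl
    have hfinal : Real.log y - (c^2/(2*y^2)) * M2 + (9*|c|^3/y^3) * M3 ≤ Real.log y := by
      rcases eq_or_ne c 0 with rfl | hc
      · simp
      · have hc2 : 0 < c^2 := by positivity
        have hca : 0 < |c| := abs_pos.mpr hc
        have h18 : 18 * |c| * M3 ≤ M2 * y := by
          rw [div_le_iff₀ hvar] at hyM; linarith
        have key : (9*|c|^3/y^3) * M3 ≤ (c^2/(2*y^2)) * M2 := by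
          rw [div_mul_eq_mul_div, div_mul_eq_mul_div, div_le_div_iff₀ (by positivity) (by positivity)]
          have hcc : c^2 = |c|^2 := (sq_abs c).symm
          rw [hcc]
          nlinarith [mul_le_mul_of_nonneg_left h18 (show (0:ℝ) ≤ |c|^2*y^2 by positivity)]
        linarith
    calc ∫ ω, max (Real.log |y + c * w ω|) 0 ∂μ
        ≤ ∫ ω, (Real.log y + (c/y) * w ω - (c^2/(2*y^2)) * (w ω)^2
            + (9*|c|^3/y^3) * |w ω|^3) ∂μ :=
          integral_mono_of_nonneg (Filter.Eventually.of_forall fun ω => le_max_right _ _)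
            hRHSint (Filter.Eventually.of_forall hpt)
      _ = Real.log y - (c^2/(2*y^2)) * M2 + (9*|c|^3/y^3) * M3 := hint
      _ ≤ Real.log y := hfinal
  -- sqrt step
  have hsL : 0 < Real.sqrt (Real.log y) := Real.sqrt_pos.mpr hL
  have hsqrt_pt : ∀ ω, Real.sqrt (max (Real.log |y + c * w ω|) 0) ≤
      (max (Real.log |y + c * w ω|) 0 + Real.log y) / (2 * Real.sqrt (Real.log y)) := by
    intro ω
    set z := max (Real.log |y + c * w ω|) 0 with hz
    have hz0 : (0:ℝ) ≤ z := le_max_right _ _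
    rw [le_div_iff₀ (by positivity)]
    nlinarith [sq_nonneg (Real.sqrt z - Real.sqrt (Real.log y)), Real.sq_sqrt hz0,
      Real.sq_sqrt hL.le, Real.sqrt_nonneg z, Real.sqrt_nonneg (Real.log y)]
  calc ∫ ω, Real.sqrt (max (Real.log |y + c * w ω|) 0) ∂μ
      ≤ ∫ ω, (max (Real.log |y + c * w ω|) 0 + Real.log y) / (2 * Real.sqrt (Real.log y)) ∂μ :=
        integral_mono_of_nonneg (Filter.Eventually.of_forall fun ω => Real.sqrt_nonneg _)
          ((hImax.add (integrable_const _)).div_const _) (Filter.Eventually.of_forall hsqrt_pt)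
    _ = ((∫ ω, max (Real.log |y + c * w ω|) 0 ∂μ) + Real.log y) / (2 * Real.sqrt (Real.log y)) := by
        rw [integral_div, integral_add hImax (integrable_const _), integral_const]
        simp [measure_univ]
    _ ≤ (Real.log y + Real.log y) / (2 * Real.sqrt (Real.log y)) := by gcongr
    _ = Real.sqrt (Real.log y) := by
        rw [div_eq_iff (by positivity)]
        nlinarith [Real.sq_sqrt hL.le]
    _ = Real.sqrt (max (Real.log y) 0) := by rw [max_eq_left hL.le]

/-- Drift criterion V1 with the non-quadratic drift `V(x) = √(max(ln|x|,0))` for the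
one-dimensional critical linear stochastic system `x⁺ = a x + b w`, `|a| = 1`, `b ≠ 0`,
where `w` has zero mean, positive variance and finite third absolute moment:
`E[V(ax + bw)] ≤ V(x)` for all sufficiently large `|x|`. -/
theorem sqrt_log_drift_one_dim {Ω : Type*} [MeasurableSpace Ω]
    (μ : Measure Ω) [IsProbabilityMeasure μ]
    (w : Ω → ℝ) (hmeas : Measurable w)
    (hmean : ∫ ω, w ω ∂μ = 0)
    (hvar : 0 < ∫ ω, (w ω) ^ 2 ∂μ)
    (h3 : Integrable (fun ω => |w ω| ^ 3) μ)
    (b : ℝ) (hb : b ≠ 0) (a : ℝ) (ha : a = -1 ∨ a = 1) :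
    ∃ R : ℝ, 1 ≤ R ∧ ∀ x : ℝ, R ≤ |x| →
      ∫ ω, Real.sqrt (max (Real.log |a * x + b * w ω|) 0) ∂μ ≤
        Real.sqrt (max (Real.log |x|) 0) := by
  refine ⟨max 2 (18 * |b| * (∫ ω, |w ω| ^ 3 ∂μ) / (∫ ω, (w ω) ^ 2 ∂μ)),
    le_trans one_le_two (le_max_left _ _), fun x hx => ?_⟩
  obtain ⟨c, hc, hrw⟩ : ∃ c : ℝ, |c| = |b| ∧
      ∀ ω, |a * x + b * w ω| = abs (|x| + c * w ω) := by
    rcases ha with rfl | rfl <;> rcases le_or_gt 0 x with hx0 | hx0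
    · exact ⟨-b, abs_neg b, fun ω => by
        rw [abs_of_nonneg hx0, show -1*x + b*w ω = -(x + -b*w ω) by ring, abs_neg]⟩
    · exact ⟨b, rfl, fun ω => by
        rw [abs_of_neg hx0, show -1*x + b*w ω = -x + b*w ω by ring]⟩
    · exact ⟨b, rfl, fun ω => by
        rw [abs_of_nonneg hx0, show (1:ℝ)*x + b*w ω = x + b*w ω by ring]⟩
    · exact ⟨-b, abs_neg b, fun ω => by
        rw [abs_of_neg hx0, show (1:ℝ)*x + b*w ω = -(-x + -b*w ω) by ring, abs_neg]⟩
  simp_rw [hrw]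
  exact core_drift μ w hmeas hmean hvar h3 c |x| (by rw [hc]; exact hx)
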